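/- Under the Streams setup and Condition (N), assume in addition that λ_{j0}(T)·T → ∞ as T → ∞ for at least one index j0. Then for every u > 0, lim_{T→∞} λ(T)·T·F̄_{D,T}( b_{D,T}(λ(T)·T)·u ) = u^{−α_D}, where b_{D,T}(t) = inf{x > 0 : F_{D,T}(x) ≥ 1 − 1/t}. In particular (taking u = 1), λ(T)·T·F̄_{D,T}(b_{D,T}(λ(T)·T)) → 1. -/

import Mathlib

open MeasureTheory Filter Set
open scoped Topology

/-- Left-continuous inverse of `1/(1-F)`: `b(t) = inf{x > 0 : F(x) ≥ 1 − 1/t}`. -/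
noncomputable def qtl (F : ℝ → ℝ) (t : ℝ) : ℝ :=
  sInf {x : ℝ | 0 < x ∧ 1 - 1 / t ≤ F x}

/-- Under the streams setup, Condition (N), and `λ_{j0}(T)·T → ∞` for some `j0`:
for every `u > 0`, `λ(T)·T·F̄_{D,T}(b_{D,T}(λ(T)T)·u) → u^{−α_D}` as `T → ∞`. -/

lemma rvRatioZero {f g : ℝ → ℝ} {a c : ℝ} (hac : c < a)
    (hf0 : ∀ s, 0 < f s) (hg0 : ∀ s, 0 < g s)
    (hfa : Antitone f) (hga : Antitone g)
    (hf : Tendsto (fun s => f (s * 2) / f s) atTop (𝓝 ((2:ℝ) ^ (-a))))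
    (hg : Tendsto (fun s => g (s * 2) / g s) atTop (𝓝 ((2:ℝ) ^ (-c)))) :
    Tendsto (fun s => f s / g s) atTop (𝓝 0) := by
  set q : ℝ → ℝ := fun s => f s / g s with hq
  have hq0 : ∀ s, 0 < q s := fun s => div_pos (hf0 s) (hg0 s)
  have hb2 : (0:ℝ) < (2:ℝ) ^ (-c) := Real.rpow_pos_of_pos (by norm_num) _
  have hb2a : (0:ℝ) < (2:ℝ) ^ (-a) := Real.rpow_pos_of_pos (by norm_num) _
  have hρlt : (2:ℝ) ^ (-a) / (2:ℝ) ^ (-c) < 1 := by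
    rw [div_lt_one hb2]
    exact (Real.rpow_lt_rpow_left_iff (by norm_num)).2 (by linarith)
  set θ : ℝ := ((2:ℝ) ^ (-a) / (2:ℝ) ^ (-c) + 1) / 2 with hθ
  have hρθ : (2:ℝ) ^ (-a) / (2:ℝ) ^ (-c) < θ := by rw [hθ]; linarith
  have hθ1 : θ < 1 := by rw [hθ]; linarith
  have hθ0 : 0 < θ := by
    have : 0 < (2:ℝ) ^ (-a) / (2:ℝ) ^ (-c) := div_pos hb2a hb2
    rw [hθ]; linarith
  -- q (s*2) / q s tends to the ratio
  have h1 : Tendsto (fun s => q (s * 2) / q s) atTop (𝓝 ((2:ℝ) ^ (-a) / (2:ℝ) ^ (-c))) := by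
    have := hf.div hg (ne_of_gt hb2)
    refine this.congr (fun s => ?_)
    have h1 := (hf0 s).ne'
    have h2 := (hg0 s).ne'
    have h3 := (hf0 (s*2)).ne'
    have h4 := (hg0 (s*2)).ne'
    simp only [Pi.div_apply, hq]
    rw [div_div_div_eq, div_div_div_eq, mul_comm (f s)]
  have h2 : Tendsto (fun s => g s / g (s * 2)) atTop (𝓝 (((2:ℝ) ^ (-c))⁻¹)) := by
    have := hg.inv₀ (ne_of_gt hb2)
    refine this.congr (fun s => ?_)
    rw [inv_div]
  set C : ℝ := ((2:ℝ) ^ (-c))⁻¹ + 1 with hC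
  have hC0 : 0 < C := by positivity
  have hev : ∀ᶠ s in atTop, q (s * 2) / q s < θ ∧ g s / g (s * 2) < C := by
    filter_upwards [h1.eventually_lt_const hρθ,
      h2.eventually_lt_const (lt_add_one _)] with s hs1 hs2
    exact ⟨hs1, hs2⟩
  obtain ⟨S₀, hS₀⟩ := (hev.and (eventually_ge_atTop (1:ℝ))).exists_forall_of_atTop
  set S : ℝ := max S₀ 1 with hSdef
  have hS1 : (1:ℝ) ≤ S := le_max_right _ _
  have hS0pos : 0 < S := lt_of_lt_of_le one_pos hS1
  have hS : ∀ s, S ≤ s → q (s * 2) < θ * q s ∧ g s / g (s * 2) < C := by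
    intro s hs
    have := hS₀ s (le_trans (le_max_left _ _) hs)
    refine ⟨?_, this.1.2⟩
    have h := this.1.1
    rwa [div_lt_iff₀ (hq0 s)] at h
  have hSle : ∀ n : ℕ, S ≤ S * 2 ^ n := by
    intro n
    nth_rewrite 1 [← mul_one S]
    exact mul_le_mul_of_nonneg_left (one_le_pow₀ (by norm_num : (1:ℝ) ≤ 2)) (le_of_lt hS0pos)
  have key : ∀ n : ℕ, q (S * 2 ^ n) ≤ θ ^ n * q S := by
    intro n
    induction n with
    | zero => simp
    | succ n ih =>
      have h1 : S * 2 ^ (n + 1) = (S * 2 ^ n) * 2 := by ring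
      rw [h1]
      calc q ((S * 2 ^ n) * 2) ≤ θ * q (S * 2 ^ n) := le_of_lt (hS _ (hSle n)).1
        _ ≤ θ * (θ ^ n * q S) := mul_le_mul_of_nonneg_left ih (le_of_lt hθ0)
        _ = θ ^ (n + 1) * q S := by ring
  -- now the limit
  have hq0' : ∀ s, 0 ≤ q s := fun s => le_of_lt (hq0 s)
  rw [Metric.tendsto_atTop]
  intro ε hε
  -- choose N with C * q S * θ ^ N < ε
  have hθn : Tendsto (fun n : ℕ => C * q S * θ ^ n) atTop (𝓝 0) := by
    have := tendsto_pow_atTop_nhds_zero_of_lt_one (le_of_lt hθ0) hθ1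
    simpa using (this.const_mul (C * q S))
  obtain ⟨N, hN⟩ := (hθn.eventually_lt_const hε).exists
  refine ⟨S * 2 ^ N, fun s hs => ?_⟩
  have hsS : S ≤ s := le_trans (hSle N) hs
  set n : ℕ := ⌊Real.logb 2 (s / S)⌋₊ with hn
  have hsS1 : 1 ≤ s / S := (one_le_div hS0pos).2 hsS
  have hsSpos : 0 < s / S := lt_of_lt_of_le one_pos hsS1
  have hlogb_nonneg : 0 ≤ Real.logb 2 (s / S) := Real.logb_nonneg (by norm_num) hsS1
  have h2n_le : S * 2 ^ n ≤ s := by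
    have h1 : ((n : ℝ)) ≤ Real.logb 2 (s / S) := Nat.floor_le hlogb_nonneg
    have h2 : (2:ℝ) ^ (n:ℝ) ≤ (2:ℝ) ^ (Real.logb 2 (s / S)) :=
      (Real.rpow_le_rpow_left_iff (by norm_num)).2 h1
    rw [Real.rpow_logb (by norm_num) (by norm_num) hsSpos, Real.rpow_natCast] at h2
    calc S * 2 ^ n ≤ S * (s / S) := mul_le_mul_of_nonneg_left h2 (le_of_lt hS0pos)
      _ = s := by field_simp
  have h2n_lt : s ≤ S * 2 ^ (n + 1) := by
    have h1 : Real.logb 2 (s / S) < (n:ℝ) + 1 := Nat.lt_floor_add_one _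
    have h2 : (2:ℝ) ^ (Real.logb 2 (s / S)) ≤ (2:ℝ) ^ ((n:ℝ) + 1) :=
      (Real.rpow_le_rpow_left_iff (by norm_num)).2 (le_of_lt h1)
    rw [Real.rpow_logb (by norm_num) (by norm_num) hsSpos] at h2
    have h3 : ((n:ℝ) + 1) = ((n + 1 : ℕ) : ℝ) := by push_cast; ring
    rw [h3, Real.rpow_natCast] at h2
    calc s = S * (s / S) := by field_simp
      _ ≤ S * 2 ^ (n + 1) := mul_le_mul_of_nonneg_left h2 (le_of_lt hS0pos)
  have hNn : N ≤ n := by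
    apply Nat.le_floor
    have h1 : (2:ℝ) ^ (N:ℝ) ≤ s / S := by
      rw [Real.rpow_natCast]
      rw [le_div_iff₀ hS0pos]
      linarith [hs]
    calc (N:ℝ) = Real.logb 2 ((2:ℝ) ^ (N:ℝ)) := (Real.logb_rpow (by norm_num) (by norm_num)).symm
      _ ≤ Real.logb 2 (s / S) := (Real.logb_le_logb (by norm_num)
          (Real.rpow_pos_of_pos (by norm_num) _) hsSpos).2 h1
  -- main estimate
  have hmain : q s ≤ C * q S * θ ^ n := by
    have e1 : q s ≤ f (S * 2 ^ n) / g (S * 2 ^ (n + 1)) :=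
      div_le_div₀ (le_of_lt (hf0 _)) (hfa h2n_le) (hg0 _) (hga h2n_lt)
    have e2 : f (S * 2 ^ n) / g (S * 2 ^ (n + 1)) =
        q (S * 2 ^ n) * (g (S * 2 ^ n) / g (S * 2 ^ (n + 1))) := by
      simp only [hq]
      field_simp
      rw [mul_div_mul_right _ _ (hg0 (S * 2 ^ n)).ne']
    have e3 : g (S * 2 ^ n) / g (S * 2 ^ (n + 1)) ≤ C := by
      have h1 : S * 2 ^ (n + 1) = (S * 2 ^ n) * 2 := by ring
      rw [h1]
      exact le_of_lt (hS _ (hSle n)).2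
    calc q s ≤ q (S * 2 ^ n) * (g (S * 2 ^ n) / g (S * 2 ^ (n + 1))) := by rw [← e2]; exact e1
      _ ≤ q (S * 2 ^ n) * C := mul_le_mul_of_nonneg_left e3 (hq0' _)
      _ ≤ (θ ^ n * q S) * C := mul_le_mul_of_nonneg_right (key n) (le_of_lt hC0)
      _ = C * q S * θ ^ n := by ring
  have hθmono : θ ^ n ≤ θ ^ N := pow_le_pow_of_le_one (le_of_lt hθ0) (le_of_lt hθ1) hNn
  rw [Real.dist_eq, sub_zero, abs_of_nonneg (hq0' s)]
  calc q s ≤ C * q S * θ ^ n := hmain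
    _ ≤ C * q S * θ ^ N := mul_le_mul_of_nonneg_left hθmono (mul_nonneg (le_of_lt hC0) (hq0' S))
    _ < ε := hN


noncomputable def mG (p : ℕ) (F lam : Fin p → ℝ → ℝ) (T x : ℝ) : ℝ :=
  ∑ i, (lam i T / ∑ k, lam k T) * F i x

noncomputable def mb (p : ℕ) (F lam : Fin p → ℝ → ℝ) (T : ℝ) : ℝ :=
  qtl (fun x => ∑ i, (lam i T / ∑ k, lam k T) * F i x) ((∑ i, lam i T) * T)

theorem mixture_tail_at_quantile
    (p : ℕ) (hp : 1 ≤ p) (F : Fin p → ℝ → ℝ) (α : Fin p → ℝ)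
    (hα : ∀ j, 1 < α j ∧ α j < 2)
    (hmono : ∀ j, Monotone (F j))
    (hzero : ∀ j, F j 0 = 0)
    (hnonneg : ∀ j x, 0 ≤ F j x)
    (hle_one : ∀ j x, F j x ≤ 1)
    (htop : ∀ j, Tendsto (F j) atTop (𝓝 1))
    (htailpos : ∀ j, ∀ x > (0 : ℝ), F j x < 1)
    (hRV : ∀ j, ∀ x > (0 : ℝ),
      Tendsto (fun s : ℝ => (1 - F j (s * x)) / (1 - F j s)) atTop (𝓝 (x ^ (-(α j)))))
    (lam : Fin p → ℝ → ℝ)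
    (hlam : ∀ j, ∀ T > (0 : ℝ), 0 < lam j T)
    -- Condition (N)
    (hN : 0 < Filter.liminf
      (fun T : ℝ => ⨆ j : {j : Fin p // α j = ⨅ k, α k}, lam j.1 T / ∑ k, lam k T) atTop)
    (j0 : Fin p) (hj0 : Tendsto (fun T => lam j0 T * T) atTop atTop) :
    ∀ u > (0 : ℝ),
      Tendsto
        (fun T : ℝ =>
          (∑ j, lam j T) * T *
            (1 - ∑ j, (lam j T / ∑ k, lam k T) *
              F j (qtl (fun x => ∑ i, (lam i T / ∑ k, lam k T) * F i x)
                     ((∑ i, lam i T) * T) * u)))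
        atTop (𝓝 (u ^ (-(⨅ k, α k)))) := by
  classical
  haveI hne : Nonempty (Fin p) := ⟨⟨0, by omega⟩⟩
  intro u hu
  show Tendsto
    (fun T : ℝ => (∑ j, lam j T) * T * (1 - mG p F lam T (mb p F lam T * u)))
    atTop (𝓝 (u ^ (-(⨅ k, α k))))
  set αD : ℝ := ⨅ k, α k with hαDdef
  obtain ⟨jm, hjm⟩ := exists_eq_ciInf_of_finite (f := α)
  rw [← hαDdef] at hjm
  have hαD_le : ∀ j, αD ≤ α j := fun j => hαDdef ▸ ciInf_le (Finite.bddBelow_range _) j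
  have h1αD : 1 < αD := hjm ▸ (hα jm).1
  have hαD_pos : 0 < αD := by linarith
  -- basic facts about the tails
  have hFb_pos : ∀ j x, 0 < 1 - F j x := by
    intro j x
    rcases le_or_gt x 0 with h | h
    · have h1 : F j x ≤ F j 0 := hmono j h
      rw [hzero j] at h1
      linarith
    · linarith [htailpos j x h]
  have hFb_anti : ∀ j, Antitone (fun x => 1 - F j x) := by
    intro j x y hxy
    simp only
    linarith [hmono j hxy]
  have hS_pos : ∀ T, 0 < T → 0 < ∑ j, lam j T := fun T hT =>
    Finset.sum_pos (fun j _ => hlam j T hT) Finset.univ_nonempty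
  have hw_pos : ∀ T, 0 < T → ∀ j, 0 < lam j T / ∑ k, lam k T := fun T hT j =>
    div_pos (hlam j T hT) (hS_pos T hT)
  have hw_le_one : ∀ T, 0 < T → ∀ j, lam j T / ∑ k, lam k T ≤ 1 := by
    intro T hT j
    rw [div_le_one (hS_pos T hT)]
    exact Finset.single_le_sum (fun k _ => (hlam k T hT).le) (Finset.mem_univ j)
  have hw_sum : ∀ T, 0 < T → ∑ j, lam j T / ∑ k, lam k T = 1 := by
    intro T hT
    rw [← Finset.sum_div, div_self (hS_pos T hT).ne']
  have hGbar_eq : ∀ T, 0 < T → ∀ x,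
      1 - mG p F lam T x = ∑ j, (lam j T / ∑ k, lam k T) * (1 - F j x) := by
    intro T hT x
    simp only [mG, mul_one_sub]
    rw [Finset.sum_sub_distrib, hw_sum T hT]
  have hGbar_pos : ∀ T, 0 < T → ∀ x, 0 < 1 - mG p F lam T x := by
    intro T hT x
    rw [hGbar_eq T hT]
    exact Finset.sum_pos (fun j _ => mul_pos (hw_pos T hT j) (hFb_pos j x)) Finset.univ_nonempty
  have hG_mono : ∀ T, 0 < T → Monotone (mG p F lam T) := by
    intro T hT x y hxy
    exact Finset.sum_le_sum (fun j _ =>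
      mul_le_mul_of_nonneg_left (hmono j hxy) (hw_pos T hT j).le)
  have ht_top : Tendsto (fun T => (∑ j, lam j T) * T) atTop atTop := by
    apply tendsto_atTop_mono' atTop ?_ hj0
    filter_upwards [eventually_gt_atTop 0] with T hT
    have h1 : lam j0 T ≤ ∑ j, lam j T :=
      Finset.single_le_sum (fun j _ => (hlam j T hT).le) (Finset.mem_univ j0)
    exact mul_le_mul_of_nonneg_right h1 hT.le
  -- Condition (N): a uniform lower bound on the dominant weight
  have hcex : ∃ c > (0:ℝ), ∀ᶠ T in atTop, ∃ j, α j = αD ∧ c < lam j T / ∑ k, lam k T := by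
    set L := Filter.liminf
      (fun T : ℝ => ⨆ j : {j : Fin p // α j = αD}, lam j.1 T / ∑ k, lam k T) atTop with hL
    haveI hDne : Nonempty {j : Fin p // α j = αD} := ⟨⟨jm, hjm⟩⟩
    have hbdd : IsBoundedUnder (· ≥ ·) atTop
        (fun T : ℝ => ⨆ j : {j : Fin p // α j = αD}, lam j.1 T / ∑ k, lam k T) := by
      refine ⟨0, eventually_map.2 ?_⟩
      filter_upwards [eventually_gt_atTop 0] with T hT
      have h1 : lam jm T / ∑ k, lam k T ≤
          ⨆ j : {j : Fin p // α j = αD}, lam j.1 T / ∑ k, lam k T :=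
        le_ciSup (f := fun j : {j : Fin p // α j = αD} => lam j.1 T / ∑ k, lam k T)
          (Finite.bddAbove_range _) ⟨jm, hjm⟩
      exact le_trans (hw_pos T hT jm).le h1
    refine ⟨L / 2, by linarith [hN], ?_⟩
    have hev := eventually_lt_of_lt_liminf (show L / 2 < L by linarith [hN]) hbdd
    filter_upwards [hev] with T hT
    obtain ⟨j, hj⟩ := exists_eq_ciSup_of_finite
      (f := fun j : {j : Fin p // α j = αD} => lam j.1 T / ∑ k, lam k T)
    exact ⟨j.1, j.2, by rw [hj]; exact hT⟩
  obtain ⟨c, hc0, hc⟩ := hcex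
  -- the quantile set is nonempty
  have hGtop : ∀ T, 0 < T → Tendsto (mG p F lam T) atTop (𝓝 1) := by
    intro T hT
    have h1 : Tendsto (fun x => ∑ i, (lam i T / ∑ k, lam k T) * F i x) atTop
        (𝓝 (∑ i, (lam i T / ∑ k, lam k T) * 1)) :=
      tendsto_finset_sum _ (fun i _ => (htop i).const_mul _)
    simp only [mul_one] at h1
    rw [hw_sum T hT] at h1
    exact h1
  have hset_nonempty : ∀ T, 0 < T →
      {x : ℝ | 0 < x ∧ 1 - 1 / ((∑ i, lam i T) * T) ≤ mG p F lam T x}.Nonempty := by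
    intro T hT
    have htT : 0 < (∑ i, lam i T) * T := mul_pos (hS_pos T hT) hT
    have h1 : (1:ℝ) - 1 / ((∑ i, lam i T) * T) < 1 := by
      have : 0 < 1 / ((∑ i, lam i T) * T) := by positivity
      linarith
    have h2 : ∀ᶠ x in atTop, 1 - 1 / ((∑ i, lam i T) * T) < mG p F lam T x :=
      (hGtop T hT).eventually_const_lt h1
    obtain ⟨x, hx1, hx2⟩ := (h2.and (eventually_gt_atTop 0)).exists
    exact ⟨x, hx2, hx1.le⟩
  have hmb_def : ∀ T, mb p F lam T =
      sInf {x : ℝ | 0 < x ∧ 1 - 1 / ((∑ i, lam i T) * T) ≤ mG p F lam T x} := by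
    intro T; rfl
  -- below the quantile the tail is large
  have hb_lb : ∀ T, 0 < T → ∀ x, 0 < x → x < mb p F lam T →
      1 / ((∑ i, lam i T) * T) ≤ 1 - mG p F lam T x := by
    intro T hT x hx0 hxb
    by_contra h
    push_neg at h
    have hmem : x ∈ {x : ℝ | 0 < x ∧ 1 - 1 / ((∑ i, lam i T) * T) ≤ mG p F lam T x} :=
      ⟨hx0, by linarith⟩
    have := csInf_le ⟨0, fun y hy => hy.1.le⟩ hmem
    rw [← hmb_def T] at this
    linarith
  -- above the quantile the tail is small
  have hb_ub : ∀ T, 0 < T → ∀ x, mb p F lam T < x →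
      1 - mG p F lam T x ≤ 1 / ((∑ i, lam i T) * T) := by
    intro T hT x hx
    rw [hmb_def T] at hx
    obtain ⟨y, hy, hyx⟩ := exists_lt_of_csInf_lt (hset_nonempty T hT) hx
    have h1 : mG p F lam T y ≤ mG p F lam T x := hG_mono T hT hyx.le
    have h2 := hy.2
    linarith
  -- the quantile tends to infinity
  have hb_top : Tendsto (mb p F lam) atTop atTop := by
    rw [tendsto_atTop]
    intro M
    set M' : ℝ := max M 1 with hM'
    have hM'pos : 0 < M' := lt_of_lt_of_le one_pos (le_max_right _ _)
    set m : ℝ := Finset.univ.inf' Finset.univ_nonempty (fun j => 1 - F j M') with hm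
    have hmpos : 0 < m := by
      rw [hm, Finset.lt_inf'_iff]
      exact fun j _ => hFb_pos j M'
    set δ : ℝ := c * m with hδ
    have hδpos : 0 < δ := mul_pos hc0 hmpos
    filter_upwards [eventually_gt_atTop 0, hc, ht_top.eventually_gt_atTop (1/δ)]
      with T hT hcT htT
    obtain ⟨jd, hjdD, hjdc⟩ := hcT
    have ht0 : 0 < (∑ i, lam i T) * T := mul_pos (hS_pos T hT) hT
    have h1t : 1 / ((∑ i, lam i T) * T) < δ := by
      rw [div_lt_iff₀ ht0]
      rw [div_lt_iff₀ hδpos] at htT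
      nlinarith
    have hGbarM : δ ≤ 1 - mG p F lam T M' := by
      rw [hGbar_eq T hT]
      have h1 : c * (1 - F jd M') ≤ (lam jd T / ∑ k, lam k T) * (1 - F jd M') :=
        mul_le_mul_of_nonneg_right hjdc.le (hFb_pos jd M').le
      have h2 : (lam jd T / ∑ k, lam k T) * (1 - F jd M') ≤
          ∑ j, (lam j T / ∑ k, lam k T) * (1 - F j M') :=
        Finset.single_le_sum
          (fun j _ => mul_nonneg (hw_pos T hT j).le (hFb_pos j M').le) (Finset.mem_univ jd)
      have h3 : m ≤ 1 - F jd M' := by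
        rw [hm]
        exact Finset.inf'_le _ (Finset.mem_univ jd)
      have h4 : c * m ≤ c * (1 - F jd M') := mul_le_mul_of_nonneg_left h3 hc0.le
      rw [hδ]
      linarith
    have hMb : M' ≤ mb p F lam T := by
      rw [hmb_def T]
      apply le_csInf (hset_nonempty T hT)
      intro x hx
      by_contra hlt
      push_neg at hlt
      have h5 : mG p F lam T x ≤ mG p F lam T M' := hG_mono T hT hlt.le
      have h6 := hx.2
      linarith
    exact le_trans (le_max_left M 1) hMb
  -- tail ratios along the quantile
  have hr : ∀ j, ∀ x : ℝ, 0 < x → Tendsto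
      (fun T => (1 - F j (mb p F lam T * x)) / (1 - F j (mb p F lam T)))
      atTop (𝓝 (x ^ (-(α j)))) := fun j x hx => (hRV j x hx).comp hb_top
  have hcross : ∀ j k, α k < α j → Tendsto
      (fun T => (1 - F j (mb p F lam T)) / (1 - F k (mb p F lam T))) atTop (𝓝 0) :=
    fun j k h => (rvRatioZero h (fun s => hFb_pos j s) (fun s => hFb_pos k s)
      (hFb_anti j) (hFb_anti k) (hRV j 2 two_pos) (hRV k 2 two_pos)).comp hb_top
  -- the core limit: tail ratio of the mixture at the quantile
  have hL5 : ∀ x : ℝ, 0 < x → Tendsto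
      (fun T => (1 - mG p F lam T (mb p F lam T * x)) / (1 - mG p F lam T (mb p F lam T)))
      atTop (𝓝 (x ^ (-αD))) := by
    intro x hx
    set D : Finset (Fin p) := Finset.univ.filter (fun k => α k = αD) with hD
    have hjmD : jm ∈ D := Finset.mem_filter.2 ⟨Finset.mem_univ _, hjm⟩
    set e : Fin p → ℝ → ℝ := fun j T =>
      if α j = αD then
        |(1 - F j (mb p F lam T * x)) / (1 - F j (mb p F lam T)) - x ^ (-αD)|
      else (1/c) * (∑ k ∈ D, (1 - F j (mb p F lam T)) / (1 - F k (mb p F lam T))) *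
        |(1 - F j (mb p F lam T * x)) / (1 - F j (mb p F lam T)) - x ^ (-αD)| with he
    have he_tendsto : ∀ j, Tendsto (e j) atTop (𝓝 0) := by
      intro j
      by_cases hj : α j = αD
      · simp only [he, hj, if_pos]
        have h1 := hr j x hx
        rw [hj] at h1
        have h2 := (h1.sub_const (x ^ (-αD))).abs
        simpa using h2
      · simp only [he, hj, if_neg, ite_false]
        have h1 : Tendsto
            (fun T => ∑ k ∈ D, (1 - F j (mb p F lam T)) / (1 - F k (mb p F lam T)))
            atTop (𝓝 0) := by
          have h2 := tendsto_finset_sum D (fun k hk => by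
            have hkD : α k = αD := (Finset.mem_filter.1 hk).2
            have hkj : α k < α j := by
              rw [hkD]
              exact lt_of_le_of_ne (hαD_le j) (fun h => hj h.symm)
            exact hcross j k hkj)
          simpa using h2
        have h2 : Tendsto
            (fun T => |(1 - F j (mb p F lam T * x)) / (1 - F j (mb p F lam T)) - x ^ (-αD)|)
            atTop (𝓝 (|x ^ (-(α j)) - x ^ (-αD)|)) := ((hr j x hx).sub_const _).abs
        have h3 := (h1.const_mul (1/c)).mul h2
        simpa using h3
    have hbound : ∀ᶠ T in atTop,
        |(1 - mG p F lam T (mb p F lam T * x)) / (1 - mG p F lam T (mb p F lam T))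
          - x ^ (-αD)| ≤ ∑ j, e j T := by
      filter_upwards [eventually_gt_atTop 0, hc] with T hT hcT
      obtain ⟨jd, hjdD, hjdc⟩ := hcT
      have hBpos : 0 < 1 - mG p F lam T (mb p F lam T) := hGbar_pos T hT _
      set B : ℝ := 1 - mG p F lam T (mb p F lam T) with hB
      set ρ : Fin p → ℝ := fun j =>
        (lam j T / ∑ k, lam k T) * (1 - F j (mb p F lam T)) / B with hρ
      set r : Fin p → ℝ := fun j =>
        (1 - F j (mb p F lam T * x)) / (1 - F j (mb p F lam T)) with hrr
      have hρ_nonneg : ∀ j, 0 ≤ ρ j := fun j =>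
        div_nonneg (mul_nonneg (hw_pos T hT j).le (hFb_pos j _).le) hBpos.le
      have hsum_terms : ∑ j, (lam j T / ∑ k, lam k T) * (1 - F j (mb p F lam T)) = B := by
        rw [hB, hGbar_eq T hT]
      have hρ_le_one : ∀ j, ρ j ≤ 1 := by
        intro j
        rw [hρ]
        simp only
        rw [div_le_one hBpos, ← hsum_terms]
        exact Finset.single_le_sum
          (fun k _ => mul_nonneg (hw_pos T hT k).le (hFb_pos k _).le) (Finset.mem_univ j)
      have hsum_ρ : ∑ j, ρ j = 1 := by
        simp only [hρ]
        rw [← Finset.sum_div, hsum_terms, div_self hBpos.ne']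
      have hratio_eq : (1 - mG p F lam T (mb p F lam T * x)) / B = ∑ j, ρ j * r j := by
        rw [hGbar_eq T hT, Finset.sum_div]
        have haux : ∀ (wv fb fbx Bv : ℝ), fb ≠ 0 →
            wv * fbx / Bv = wv * fb / Bv * (fbx / fb) := by
          intro wv fb fbx Bv hfb
          rcases eq_or_ne Bv 0 with h | h
          · simp [h]
          · field_simp
        refine Finset.sum_congr rfl (fun j _ => ?_)
        simp only [hρ, hrr]
        exact haux _ _ _ _ (hFb_pos j (mb p F lam T)).ne'
      rw [hratio_eq]
      have hstep1 : ∑ j, ρ j * r j - x ^ (-αD) = ∑ j, ρ j * (r j - x ^ (-αD)) := by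
        rw [Finset.sum_congr rfl (fun j _ => mul_sub (ρ j) (r j) (x ^ (-αD))),
          Finset.sum_sub_distrib, ← Finset.sum_mul, hsum_ρ, one_mul]
      rw [hstep1]
      refine le_trans (Finset.abs_sum_le_sum_abs _ _) (Finset.sum_le_sum fun j _ => ?_)
      rw [abs_mul, abs_of_nonneg (hρ_nonneg j)]
      by_cases hj : α j = αD
      · simp only [he, hj, if_pos]
        calc ρ j * |r j - x ^ (-αD)| ≤ 1 * |r j - x ^ (-αD)| :=
              mul_le_mul_of_nonneg_right (hρ_le_one j) (abs_nonneg _)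
          _ = |r j - x ^ (-αD)| := one_mul _
      · simp only [he, hj, ite_false]
        have hρj_bound : ρ j ≤ (1/c) *
            (∑ k ∈ D, (1 - F j (mb p F lam T)) / (1 - F k (mb p F lam T))) := by
          have hBlow : c * (1 - F jd (mb p F lam T)) ≤ B := by
            rw [← hsum_terms]
            calc c * (1 - F jd (mb p F lam T))
                ≤ (lam jd T / ∑ k, lam k T) * (1 - F jd (mb p F lam T)) :=
                  mul_le_mul_of_nonneg_right hjdc.le (hFb_pos jd _).le
              _ ≤ _ := Finset.single_le_sum
                  (fun k _ => mul_nonneg (hw_pos T hT k).le (hFb_pos k _).le)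
                  (Finset.mem_univ jd)
          have hterm : (1 - F j (mb p F lam T)) / (1 - F jd (mb p F lam T)) ≤
              ∑ k ∈ D, (1 - F j (mb p F lam T)) / (1 - F k (mb p F lam T)) :=
            Finset.single_le_sum
              (fun k _ => div_nonneg (hFb_pos j _).le (hFb_pos k _).le)
              (Finset.mem_filter.2 ⟨Finset.mem_univ _, hjdD⟩)
          have hρj : ρ j ≤ (1 - F j (mb p F lam T)) / (c * (1 - F jd (mb p F lam T))) := by
            rw [hρ]
            simp only
            apply div_le_div₀ (hFb_pos j _).le
            · calc (lam j T / ∑ k, lam k T) * (1 - F j (mb p F lam T))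
                  ≤ 1 * (1 - F j (mb p F lam T)) :=
                    mul_le_mul_of_nonneg_right (hw_le_one T hT j) (hFb_pos j _).le
                _ = _ := one_mul _
            · exact mul_pos hc0 (hFb_pos jd _)
            · exact hBlow
          calc ρ j ≤ (1 - F j (mb p F lam T)) / (c * (1 - F jd (mb p F lam T))) := hρj
            _ = (1/c) * ((1 - F j (mb p F lam T)) / (1 - F jd (mb p F lam T))) := by
                field_simp
            _ ≤ (1/c) * ∑ k ∈ D, (1 - F j (mb p F lam T)) / (1 - F k (mb p F lam T)) :=
                mul_le_mul_of_nonneg_left hterm (by positivity)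
        calc ρ j * |r j - x ^ (-αD)|
            ≤ ((1/c) * ∑ k ∈ D, (1 - F j (mb p F lam T)) / (1 - F k (mb p F lam T))) *
              |r j - x ^ (-αD)| :=
              mul_le_mul_of_nonneg_right hρj_bound (abs_nonneg _)
          _ = _ := by ring
    have hsum_e : Tendsto (fun T => ∑ j, e j T) atTop (𝓝 0) := by
      have := tendsto_finset_sum Finset.univ (fun j (_ : j ∈ Finset.univ) => he_tendsto j)
      simpa using this
    have habs : Tendsto (fun T =>
        |(1 - mG p F lam T (mb p F lam T * x)) / (1 - mG p F lam T (mb p F lam T))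
          - x ^ (-αD)|) atTop (𝓝 0) :=
      squeeze_zero' (Eventually.of_forall (fun T => abs_nonneg _)) hbound hsum_e
    rw [← tendsto_sub_nhds_zero_iff]
    exact (tendsto_zero_iff_abs_tendsto_zero _).2 habs
  -- final assembly
  set L : ℝ := u ^ (-αD) with hLdef
  have hLpos : 0 < L := Real.rpow_pos_of_pos hu _
  rw [Metric.tendsto_nhds]
  intro ε hε
  have hcont : Tendsto (fun y : ℝ => L * y ^ αD) (𝓝 1) (𝓝 L) := by
    have h1 : ContinuousAt (fun y : ℝ => y ^ αD) 1 :=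
      Real.continuousAt_rpow_const 1 αD (Or.inl one_ne_zero)
    have h2 := h1.tendsto.const_mul L
    simpa [Real.one_rpow] using h2
  have hev2 : ∀ᶠ y in 𝓝 (1:ℝ), |L * y ^ αD - L| < ε/2 := by
    have := Metric.tendsto_nhds.1 hcont (ε/2) (by linarith)
    simpa [Real.dist_eq] using this
  obtain ⟨w', hw'1, hw'ε⟩ : ∃ w' : ℝ, 1 < w' ∧ |L * w' ^ αD - L| < ε/2 := by
    have h3 : ∀ᶠ y in 𝓝[>] (1:ℝ), |L * y ^ αD - L| < ε/2 ∧ 1 < y := by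
      filter_upwards [hev2.filter_mono nhdsWithin_le_nhds, self_mem_nhdsWithin] with y h1 h2
      exact ⟨h1, h2⟩
    obtain ⟨y, hy⟩ := h3.exists
    exact ⟨y, hy.2, hy.1⟩
  obtain ⟨v, hv0, hv1, hvε⟩ : ∃ v : ℝ, 0 < v ∧ v < 1 ∧ |L * v ^ αD - L| < ε/2 := by
    have h3 : ∀ᶠ y in 𝓝[<] (1:ℝ), (|L * y ^ αD - L| < ε/2 ∧ 0 < y) ∧ y < 1 := by
      filter_upwards [hev2.filter_mono nhdsWithin_le_nhds,
        (eventually_gt_nhds one_pos).filter_mono nhdsWithin_le_nhds,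
        self_mem_nhdsWithin] with y h1 h2 h3
      exact ⟨⟨h1, h2⟩, h3⟩
    obtain ⟨y, hy⟩ := h3.exists
    exact ⟨y, hy.1.2, hy.2, hy.1.1⟩
  have hw'pos : (0:ℝ) < w' := lt_trans one_pos hw'1
  have haux2 : ∀ A Bv C : ℝ, Bv ≠ 0 → (A / Bv) / (C / Bv) = A / C := by
    intro A Bv C h1
    rcases eq_or_ne C 0 with h2 | h2
    · simp [h2]
    · field_simp
  -- upper comparison function
  have hQw : Tendsto (fun T =>
      (1 - mG p F lam T (mb p F lam T * u)) / (1 - mG p F lam T (mb p F lam T * w')))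
      atTop (𝓝 (L * w' ^ αD)) := by
    have h1 := (hL5 u hu).div (hL5 w' hw'pos) (Real.rpow_pos_of_pos hw'pos _).ne'
    have h2 : u ^ (-αD) / w' ^ (-αD) = L * w' ^ αD := by
      rw [hLdef, Real.rpow_neg hw'pos.le, div_inv_eq_mul]
    rw [h2] at h1
    apply h1.congr'
    filter_upwards [eventually_gt_atTop 0] with T hT
    exact haux2 _ _ _ (hGbar_pos T hT (mb p F lam T)).ne'
  have hQv : Tendsto (fun T =>
      (1 - mG p F lam T (mb p F lam T * u)) / (1 - mG p F lam T (mb p F lam T * v)))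
      atTop (𝓝 (L * v ^ αD)) := by
    have h1 := (hL5 u hu).div (hL5 v hv0) (Real.rpow_pos_of_pos hv0 _).ne'
    have h2 : u ^ (-αD) / v ^ (-αD) = L * v ^ αD := by
      rw [hLdef, Real.rpow_neg hv0.le, div_inv_eq_mul]
    rw [h2] at h1
    apply h1.congr'
    filter_upwards [eventually_gt_atTop 0] with T hT
    exact haux2 _ _ _ (hGbar_pos T hT (mb p F lam T)).ne'
  have hfub : ∀ᶠ T in atTop,
      (∑ j, lam j T) * T * (1 - mG p F lam T (mb p F lam T * u)) ≤
      (1 - mG p F lam T (mb p F lam T * u)) / (1 - mG p F lam T (mb p F lam T * w')) := by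
    filter_upwards [eventually_gt_atTop 0, hb_top.eventually_ge_atTop 1] with T hT hb1
    have hbpos : 0 < mb p F lam T := lt_of_lt_of_le one_pos hb1
    have ht0 : 0 < (∑ i, lam i T) * T := mul_pos (hS_pos T hT) hT
    have h1 : mb p F lam T < mb p F lam T * w' := lt_mul_of_one_lt_right hbpos hw'1
    have h2 : 1 - mG p F lam T (mb p F lam T * w') ≤ 1 / ((∑ i, lam i T) * T) :=
      hb_ub T hT _ h1
    have hGw'pos := hGbar_pos T hT (mb p F lam T * w')
    have hGupos := hGbar_pos T hT (mb p F lam T * u)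
    rw [le_div_iff₀ hGw'pos]
    have h3 : ((∑ i, lam i T) * T) * (1 - mG p F lam T (mb p F lam T * w')) ≤ 1 := by
      calc ((∑ i, lam i T) * T) * (1 - mG p F lam T (mb p F lam T * w'))
          ≤ ((∑ i, lam i T) * T) * (1 / ((∑ i, lam i T) * T)) :=
            mul_le_mul_of_nonneg_left h2 ht0.le
        _ = 1 := mul_one_div_cancel ht0.ne'
    calc (∑ j, lam j T) * T * (1 - mG p F lam T (mb p F lam T * u)) *
          (1 - mG p F lam T (mb p F lam T * w'))
        = (1 - mG p F lam T (mb p F lam T * u)) *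
          (((∑ i, lam i T) * T) * (1 - mG p F lam T (mb p F lam T * w'))) := by ring
      _ ≤ (1 - mG p F lam T (mb p F lam T * u)) * 1 :=
          mul_le_mul_of_nonneg_left h3 hGupos.le
      _ = 1 - mG p F lam T (mb p F lam T * u) := mul_one _
  have hflb : ∀ᶠ T in atTop,
      (1 - mG p F lam T (mb p F lam T * u)) / (1 - mG p F lam T (mb p F lam T * v)) ≤
      (∑ j, lam j T) * T * (1 - mG p F lam T (mb p F lam T * u)) := by
    filter_upwards [eventually_gt_atTop 0, hb_top.eventually_ge_atTop 1] with T hT hb1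
    have hbpos : 0 < mb p F lam T := lt_of_lt_of_le one_pos hb1
    have ht0 : 0 < (∑ i, lam i T) * T := mul_pos (hS_pos T hT) hT
    have h1 : mb p F lam T * v < mb p F lam T := mul_lt_of_lt_one_right hbpos hv1
    have h2 : 1 / ((∑ i, lam i T) * T) ≤ 1 - mG p F lam T (mb p F lam T * v) :=
      hb_lb T hT _ (mul_pos hbpos hv0) h1
    have hGvpos := hGbar_pos T hT (mb p F lam T * v)
    have hGupos := hGbar_pos T hT (mb p F lam T * u)
    rw [div_le_iff₀ hGvpos]
    have h3 : 1 ≤ ((∑ i, lam i T) * T) * (1 - mG p F lam T (mb p F lam T * v)) := by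
      calc (1:ℝ) = ((∑ i, lam i T) * T) * (1 / ((∑ i, lam i T) * T)) :=
            (mul_one_div_cancel ht0.ne').symm
        _ ≤ ((∑ i, lam i T) * T) * (1 - mG p F lam T (mb p F lam T * v)) :=
            mul_le_mul_of_nonneg_left h2 ht0.le
    calc (1 - mG p F lam T (mb p F lam T * u))
        = (1 - mG p F lam T (mb p F lam T * u)) * 1 := (mul_one _).symm
      _ ≤ (1 - mG p F lam T (mb p F lam T * u)) *
          (((∑ i, lam i T) * T) * (1 - mG p F lam T (mb p F lam T * v))) :=
          mul_le_mul_of_nonneg_left h3 hGupos.le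
      _ = (∑ j, lam j T) * T * (1 - mG p F lam T (mb p F lam T * u)) *
          (1 - mG p F lam T (mb p F lam T * v)) := by ring
  have hQwlt : ∀ᶠ T in atTop,
      (1 - mG p F lam T (mb p F lam T * u)) / (1 - mG p F lam T (mb p F lam T * w')) <
        L + ε := by
    apply hQw.eventually_lt_const
    have := abs_lt.1 hw'ε
    linarith [this.2]
  have hQvgt : ∀ᶠ T in atTop,
      L - ε < (1 - mG p F lam T (mb p F lam T * u)) / (1 - mG p F lam T (mb p F lam T * v)) := by
    apply hQv.eventually_const_lt
    have := abs_lt.1 hvε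
    linarith [this.1]
  filter_upwards [hfub, hflb, hQwlt, hQvgt] with T h1 h2 h3 h4
  rw [Real.dist_eq]
  exact abs_lt.2 ⟨by linarith, by linarith⟩
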